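/- Let (A,d,∧,⟨·,·⟩) be a DGA with pairing which is of Hodge type, let P : A → A be a special propagator with harmonic subspace H_P := im(id + d∘P + P∘d), and let S_P be the small subalgebra associated to P. Then S_P equals the smallest graded subspace of A that contains H_P and is closed under the product ∧ and under P; equivalently, S_P is spanned by the elements obtained from tuples of homogeneous elements of H_P by iterated applications of P and ∧ (closure under d is automatic). -/

import Mathlib

noncomputable section

/-- A cochain complex over `ℝ` (with a `ℤ`-grading realized as an internal direct sum
of submodules) together with a graded-symmetric pairing of degree `n` compatible with
the differential. -/
structure PairedComplex (A : Type*) [AddCommGroup A] [Module ℝ A] where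
  /-- the grading `A = ⊕ᵢ Aⁱ` -/
  grading : ℤ → Submodule ℝ A
  internal : DirectSum.IsInternal grading
  /-- the differential -/
  d : A →ₗ[ℝ] A
  d_degree : ∀ i : ℤ, ∀ x ∈ grading i, d x ∈ grading (i + 1)
  d_sq : ∀ x : A, d (d x) = 0
  /-- the degree of the pairing -/
  n : ℤ
  /-- the pairing -/
  pair : A →ₗ[ℝ] A →ₗ[ℝ] ℝ
  pair_degree : ∀ i j : ℤ, i + j ≠ n → ∀ x ∈ grading i, ∀ y ∈ grading j, pair x y = 0
  pair_symm : ∀ i j : ℤ, ∀ x ∈ grading i, ∀ y ∈ grading j,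
      pair x y = (-1 : ℝ) ^ (i * j) * pair y x
  pair_d : ∀ i : ℤ, ∀ x ∈ grading i, ∀ y : A,
      pair (d x) y = (-1 : ℝ) ^ (1 + i) * pair x (d y)

namespace PairedComplex

variable {A : Type*} [AddCommGroup A] [Module ℝ A] (X : PairedComplex A)

/-- `f` is homogeneous of degree `k`. -/
def IsDegree (f : A →ₗ[ℝ] A) (k : ℤ) : Prop :=
  ∀ i : ℤ, ∀ x ∈ X.grading i, f x ∈ X.grading (i + k)

/-- A chain map: a degree `0` map commuting with the differential. -/
def IsChainMap (f : A →ₗ[ℝ] A) : Prop :=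
  X.IsDegree f 0 ∧ ∀ x : A, f (X.d x) = X.d (f x)

/-- A projection: an idempotent chain map. -/
def IsProjection (p : A →ₗ[ℝ] A) : Prop :=
  X.IsChainMap p ∧ ∀ x : A, p (p x) = p x

/-- The projection `π_P = id + d∘P + P∘d` associated to a homotopy operator `P`. -/
def assocProj (P : A →ₗ[ℝ] A) : A →ₗ[ℝ] A :=
  LinearMap.id + X.d ∘ₗ P + P ∘ₗ X.d

/-- A homotopy operator: a degree `-1` map such that `−d∘P − P∘d` is a projection. -/
def IsHomotopyOperator (P : A →ₗ[ℝ] A) : Prop :=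
  X.IsDegree P (-1) ∧ X.IsProjection (-(X.d ∘ₗ P) - P ∘ₗ X.d)

/-- A homotopy operator `P` is special if `P∘P = 0` and `P∘d∘P = −P`. -/
def IsSpecial (P : A →ₗ[ℝ] A) : Prop :=
  (∀ x : A, P (P x) = 0) ∧ ∀ x : A, P (X.d (P x)) = -(P x)

/-- The symmetry property `⟨Px,y⟩ = (−1)^{deg x} ⟨x,Py⟩` of a propagator. -/
def IsSymmetricDeg (P : A →ₗ[ℝ] A) : Prop :=
  ∀ i : ℤ, ∀ x ∈ X.grading i, ∀ y : A,
    X.pair (P x) y = (-1 : ℝ) ^ i * X.pair x (P y)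

/-- A propagator: a homotopy operator satisfying the symmetry property. -/
def IsPropagator (P : A →ₗ[ℝ] A) : Prop :=
  X.IsHomotopyOperator P ∧ X.IsSymmetricDeg P

/-- A symmetric operator: `⟨px,y⟩ = ⟨x,py⟩`. -/
def IsSymmetric (p : A →ₗ[ℝ] A) : Prop :=
  ∀ x y : A, X.pair (p x) y = X.pair x (p y)

/-- Nondegeneracy of the pairing. -/
def Nondegenerate : Prop :=
  ∀ x : A, (∀ y : A, X.pair x y = 0) → x = 0

/-- The pairing is perfect: the musical map `x ↦ ⟨x,·⟩` is an isomorphism onto the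
graded dual, i.e. it is injective and every linear functional on `A^{n-i}` is
represented by an element of `A^i`. -/
def Perfect : Prop :=
  X.Nondegenerate ∧
    ∀ i : ℤ, ∀ φ : ↥(X.grading (X.n - i)) →ₗ[ℝ] ℝ,
      ∃ x ∈ X.grading i, ∀ y : ↥(X.grading (X.n - i)), X.pair x (y : A) = φ y

/-- A chain map induces an isomorphism on cohomology (elementwise formulation). -/
def IsQuasiIso (f : A →ₗ[ℝ] A) : Prop :=
  (∀ x : A, X.d x = 0 → ∃ y : A, X.d y = 0 ∧ ∃ z : A, f y - x = X.d z) ∧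
  (∀ y : A, X.d y = 0 → (∃ z : A, f y = X.d z) → ∃ w : A, y = X.d w)

/-- A graded subspace: spanned by its homogeneous elements. -/
def IsGradedSubspace (B : Submodule ℝ A) : Prop :=
  ∀ x ∈ B, x ∈ ⨆ i : ℤ, B ⊓ X.grading i

/-- A subcomplex: a graded subspace preserved by the differential. -/
def IsSubcomplex (B : Submodule ℝ A) : Prop :=
  X.IsGradedSubspace B ∧ ∀ x ∈ B, X.d x ∈ B

/-- The inclusion `B ↪ A` is a quasi-isomorphism (elementwise formulation). -/
def InclQuasiIso (B : Submodule ℝ A) : Prop :=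
  (∀ x : A, X.d x = 0 → ∃ b ∈ B, X.d b = 0 ∧ ∃ z : A, x - b = X.d z) ∧
  (∀ b ∈ B, X.d b = 0 → (∃ z : A, b = X.d z) → ∃ c ∈ B, b = X.d c)

/-- The restriction of the pairing to `B` is perfect. -/
def SubPerfect (B : Submodule ℝ A) : Prop :=
  (∀ x ∈ B, (∀ y ∈ B, X.pair x y = 0) → x = 0) ∧
    ∀ i : ℤ, ∀ φ : ↥(B ⊓ X.grading (X.n - i)) →ₗ[ℝ] ℝ,
      ∃ x ∈ B ⊓ X.grading i, ∀ y : ↥(B ⊓ X.grading (X.n - i)), X.pair x (y : A) = φ y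

/-- The orthogonal complement `B^⊥ = {x | ⟨x,b⟩ = 0 ∀ b ∈ B}`. -/
def perp (B : Submodule ℝ A) : Submodule ℝ A where
  carrier := {x : A | ∀ b ∈ B, X.pair x b = 0}
  add_mem' := by
    intro x y hx hy
    intro b hb
    have hx' := hx b hb
    have hy' := hy b hb
    simp only [map_add, LinearMap.add_apply, hx', hy', add_zero]
  zero_mem' := by
    intro b hb
    simp
  smul_mem' := by
    intro c x hx b hb
    have hx' := hx b hb
    simp only [map_smul, LinearMap.smul_apply, hx', smul_zero]

/-- A harmonic subspace: a graded subspace `H` with `ker d = H ⊕ im d`. -/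
def IsHarmonic (H : Submodule ℝ A) : Prop :=
  X.IsGradedSubspace H ∧ H ≤ LinearMap.ker X.d ∧
    H ⊓ LinearMap.range X.d = ⊥ ∧ H ⊔ LinearMap.range X.d = LinearMap.ker X.d

/-- A Hodge decomposition `B = H ⊕ d(B) ⊕ C` of a subcomplex `B ⊆ A` (with respect to
the restricted pairing); taking `B = ⊤` gives a Hodge decomposition of `A`. -/
def IsHodgeOn (B H C : Submodule ℝ A) : Prop :=
  H ≤ B ∧ C ≤ B ∧ X.IsGradedSubspace H ∧ X.IsGradedSubspace C ∧
  H ≤ LinearMap.ker X.d ∧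
  H ⊓ Submodule.map X.d B = ⊥ ∧
  H ⊔ Submodule.map X.d B = LinearMap.ker X.d ⊓ B ∧
  C ⊓ LinearMap.ker X.d = ⊥ ∧
  C ⊔ (LinearMap.ker X.d ⊓ B) = B ∧
  (∀ c ∈ C, ∀ c' ∈ C, X.pair c c' = 0) ∧
  (∀ c ∈ C, ∀ h ∈ H, X.pair c h = 0)

/-- A Hodge decomposition `A = H ⊕ im d ⊕ C` of the full complex. -/
def IsHodge (H C : Submodule ℝ A) : Prop :=
  X.IsHodgeOn ⊤ H C

/-- `A` is of Hodge type if it admits a Hodge decomposition. -/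
def IsHodgeType : Prop :=
  ∃ H C : Submodule ℝ A, X.IsHodge H C

/-- The operator `P_{H,C}` canonically associated to a Hodge decomposition `(H,C)`:
`P(dy) = −y` for `y ∈ C`, and `P = 0` on `H ⊕ C`. -/
def IsHodgeOperator (H C : Submodule ℝ A) (P : A →ₗ[ℝ] A) : Prop :=
  (∀ y ∈ C, P (X.d y) = -y) ∧ (∀ x ∈ H, P x = 0) ∧ ∀ x ∈ C, P x = 0

/-- The degenerate subspace `A_deg = {a | ⟨a,x⟩ = 0 ∀ x}`. -/
def degSub : Submodule ℝ A := X.perp ⊤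

/-- The induced pairing on cohomology is nondegenerate (elementwise formulation). -/
def CohomNondeg : Prop :=
  ∀ x : A, X.d x = 0 → (∀ y : A, X.d y = 0 → X.pair x y = 0) → ∃ z : A, x = X.d z

/-- The induced pairing on cohomology is perfect (elementwise formulation). -/
def CohomPerfect : Prop :=
  X.CohomNondeg ∧
    ∀ i : ℤ, ∀ φ : ↥(LinearMap.ker X.d ⊓ X.grading (X.n - i)) →ₗ[ℝ] ℝ,
      (∀ y : ↥(LinearMap.ker X.d ⊓ X.grading (X.n - i)),
          (∃ z : A, (y : A) = X.d z) → φ y = 0) →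
      ∃ x ∈ LinearMap.ker X.d ⊓ X.grading i,
        ∀ y : ↥(LinearMap.ker X.d ⊓ X.grading (X.n - i)), X.pair x (y : A) = φ y

end PairedComplex

namespace PairedComplex

variable {A : Type*} [AddCommGroup A] [Module ℝ A] (X : PairedComplex A)

/-- A realization of the nondegenerate quotient `Q(A) = A / A_deg`:
a surjective chain map with kernel `A_deg` preserving pairings, gradings and degree. -/
def IsQuotientMap {B : Type*} [AddCommGroup B] [Module ℝ B]
    (Y : PairedComplex B) (q : A →ₗ[ℝ] B) : Prop :=
  Function.Surjective q ∧
  LinearMap.ker q = X.degSub ∧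
  (∀ x : A, q (X.d x) = Y.d (q x)) ∧
  (∀ x y : A, Y.pair (q x) (q y) = X.pair x y) ∧
  (∀ i : ℤ, ∀ x ∈ X.grading i, q x ∈ Y.grading i) ∧
  Y.n = X.n

/-- A Hodge star on a nonnegatively graded cochain complex with pairing of degree `n`:
a degree-reversing involution (up to sign) such that `(x,y) := ⟨x,⋆y⟩` is a positive
definite inner product. -/
def IsHodgeStar (star : A →ₗ[ℝ] A) : Prop :=
  (∀ i : ℤ, ∀ x ∈ X.grading i, star x ∈ X.grading (X.n - i)) ∧
  (∀ i : ℤ, ∀ x ∈ X.grading i, star (star x) = ((-1 : ℝ) ^ (i * (X.n - i))) • x) ∧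
  (∀ x y : A, X.pair x (star y) = X.pair y (star x)) ∧
  (∀ x : A, x ≠ 0 → 0 < X.pair x (star x))

end PairedComplex

/-- A differential graded algebra with pairing: a `PairedComplex` together with an
associative product of degree `0` satisfying the Leibniz rule and compatible with the
pairing. -/
structure PairedDGA (A : Type*) [AddCommGroup A] [Module ℝ A] extends
    PairedComplex A where
  /-- the product -/
  mul : A →ₗ[ℝ] A →ₗ[ℝ] A
  mul_degree : ∀ i j : ℤ, ∀ x ∈ grading i, ∀ y ∈ grading j, mul x y ∈ grading (i + j)
  mul_assoc' : ∀ x y z : A, mul (mul x y) z = mul x (mul y z)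
  leibniz : ∀ i : ℤ, ∀ x ∈ grading i, ∀ y : A,
      d (mul x y) = mul (d x) y + ((-1 : ℝ) ^ i) • mul x (d y)
  pair_mul : ∀ x y z : A, pair (mul x y) z = pair x (mul y z)

namespace PairedDGA

variable {A : Type*} [AddCommGroup A] [Module ℝ A] (Y : PairedDGA A)

/-- `one` is a unit for the product. -/
def IsUnit (one : A) : Prop :=
  one ≠ 0 ∧ one ∈ Y.grading 0 ∧ ∀ x : A, Y.mul one x = x ∧ Y.mul x one = x

/-- graded commutativity. -/
def IsCommutative : Prop :=
  ∀ i j : ℤ, ∀ x ∈ Y.grading i, ∀ y ∈ Y.grading j,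
    Y.mul x y = ((-1 : ℝ) ^ (i * j)) • Y.mul y x

/-- An orientation of degree `n` inducing the pairing: a chain-level functional
supported in degree `n`, vanishing on boundaries, nontrivial on cohomology,
with `⟨x,y⟩ = o(x∧y)`. -/
def IsOrientation (o : A →ₗ[ℝ] ℝ) : Prop :=
  (∀ i : ℤ, i ≠ Y.n → ∀ x ∈ Y.grading i, o x = 0) ∧
  (∀ x : A, o (Y.d x) = 0) ∧
  (∃ x : A, Y.d x = 0 ∧ o x ≠ 0) ∧
  (∀ x y : A, Y.pair x y = o (Y.mul x y))

/-- The small subalgebra `S_P`: the smallest graded dg-subalgebra containing the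
harmonic subspace `H_P = im π_P` and preserved by `P`. -/
def smallSub (P : A →ₗ[ℝ] A) : Submodule ℝ A :=
  sInf {S : Submodule ℝ A |
    LinearMap.range (Y.toPairedComplex.assocProj P) ≤ S ∧
    Y.toPairedComplex.IsGradedSubspace S ∧
    (∀ x ∈ S, Y.d x ∈ S) ∧
    (∀ x ∈ S, ∀ y ∈ S, Y.mul x y ∈ S) ∧
    (∀ x ∈ S, P x ∈ S)}

end PairedDGA

/-- Elements of `A` obtained from homogeneous elements of the harmonic subspace
`H_P = im π_P` by iterated applications of `P` and of the product. -/
inductive TreeGen {A : Type*} [AddCommGroup A] [Module ℝ A]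
    (Y : PairedDGA A) (P : A →ₗ[ℝ] A) : A → Prop
  | base : ∀ (i : ℤ) (x : A), x ∈ Y.grading i →
      x ∈ LinearMap.range (Y.toPairedComplex.assocProj P) → TreeGen Y P x
  | mul : ∀ x y : A, TreeGen Y P x → TreeGen Y P y → TreeGen Y P (Y.mul x y)
  | app : ∀ x : A, TreeGen Y P x → TreeGen Y P (P x)


section AuxStmt16

variable {A : Type*} [AddCommGroup A] [Module ℝ A] (Y : PairedDGA A) (P : A →ₗ[ℝ] A)

/-- Every tree-generated element is homogeneous. -/
lemma treeGen_homog (hPdeg : Y.toPairedComplex.IsDegree P (-1)) :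
    ∀ x : A, TreeGen Y P x → ∃ i : ℤ, x ∈ Y.grading i := by
  intro x hx
  induction hx with
  | base i x hxi _ => exact ⟨i, hxi⟩
  | mul x y _ _ ihx ihy =>
      obtain ⟨i, hi⟩ := ihx
      obtain ⟨j, hj⟩ := ihy
      exact ⟨i + j, Y.mul_degree i j x hi y hj⟩
  | app x _ ih =>
      obtain ⟨i, hi⟩ := ih
      exact ⟨i + (-1), hPdeg i x hi⟩

/-- The projection `π_P` has degree `0`. -/
lemma assocProj_degree (hPdeg : Y.toPairedComplex.IsDegree P (-1)) (i : ℤ) (x : A)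
    (hx : x ∈ Y.grading i) : Y.toPairedComplex.assocProj P x ∈ Y.grading i := by
  have h1 : P x ∈ Y.grading (i + (-1)) := hPdeg i x hx
  have h2 : Y.d (P x) ∈ Y.grading (i + (-1) + 1) := Y.d_degree _ _ h1
  have h3 : Y.d x ∈ Y.grading (i + 1) := Y.d_degree _ _ hx
  have h4 : P (Y.d x) ∈ Y.grading (i + 1 + (-1)) := hPdeg _ _ h3
  have e1 : i + (-1) + 1 = i := by omega
  have e2 : i + 1 + (-1) = i := by omega
  rw [e1] at h2; rw [e2] at h4
  have : Y.toPairedComplex.assocProj P x = x + Y.d (P x) + P (Y.d x) := by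
    simp [PairedComplex.assocProj]
  rw [this]
  exact Submodule.add_mem _ (Submodule.add_mem _ hx h2) h4


lemma treeGen_mul_mem (hx : ∀ z ∈ ({x : A | TreeGen Y P x} : Set A), z ∈ Submodule.span ℝ {x : A | TreeGen Y P x}) :
    ∀ x ∈ Submodule.span ℝ {x : A | TreeGen Y P x}, ∀ y ∈ Submodule.span ℝ {x : A | TreeGen Y P x}, Y.mul x y ∈ Submodule.span ℝ {x : A | TreeGen Y P x} := by
  intro x hx' y hy'
  have hmap : Submodule.map₂ Y.mul (Submodule.span ℝ {x : A | TreeGen Y P x}) (Submodule.span ℝ {x : A | TreeGen Y P x}) ≤ Submodule.span ℝ {x : A | TreeGen Y P x} := by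
    rw [Submodule.map₂_span_span]
    apply Submodule.span_le.2
    rintro z ⟨a, ha, b, hb, rfl⟩
    exact Submodule.subset_span (TreeGen.mul a b ha hb)
  exact hmap (Submodule.apply_mem_map₂ Y.mul hx' hy')

lemma treeGen_P_mem : ∀ x ∈ Submodule.span ℝ {x : A | TreeGen Y P x}, P x ∈ Submodule.span ℝ {x : A | TreeGen Y P x} := by
  intro x hx
  have hmap : Submodule.map P (Submodule.span ℝ {x : A | TreeGen Y P x}) ≤ Submodule.span ℝ {x : A | TreeGen Y P x} := by
    rw [Submodule.map_span]
    apply Submodule.span_le.2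
    rintro z ⟨a, ha, rfl⟩
    exact Submodule.subset_span (TreeGen.app a ha)
  exact hmap ⟨x, hx, rfl⟩

lemma treeGen_d_mem (hPdeg : Y.toPairedComplex.IsDegree P (-1)) :
    ∀ x : A, TreeGen Y P x → Y.d x ∈ Submodule.span ℝ {x : A | TreeGen Y P x} := by
  intro x hx
  induction hx with
  | base i x hxi hxr =>
      obtain ⟨a, ha⟩ := hxr
      have hdx : Y.d x = Y.toPairedComplex.assocProj P (Y.d a) := by
        rw [← ha]
        simp [PairedComplex.assocProj, Y.d_sq]
      have hdeg : Y.d x ∈ Y.grading (i + 1) := Y.d_degree i x hxi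
      exact Submodule.subset_span
        (TreeGen.base (i + 1) (Y.d x) hdeg ⟨Y.d a, hdx.symm⟩)
  | mul x y hx hy ihx ihy =>
      obtain ⟨i, hi⟩ := treeGen_homog Y P hPdeg x hx
      rw [Y.leibniz i x hi y]
      have h1 : Y.mul (Y.d x) y ∈ Submodule.span ℝ {x : A | TreeGen Y P x} :=
        treeGen_mul_mem Y P (fun z hz => Submodule.subset_span hz) _ ihx _
          (Submodule.subset_span hy)
      have h2 : Y.mul x (Y.d y) ∈ Submodule.span ℝ {x : A | TreeGen Y P x} :=
        treeGen_mul_mem Y P (fun z hz => Submodule.subset_span hz) _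
          (Submodule.subset_span hx) _ ihy
      exact Submodule.add_mem _ h1 (Submodule.smul_mem _ _ h2)
  | app x hx ih =>
      obtain ⟨i, hi⟩ := treeGen_homog Y P hPdeg x hx
      have key : Y.d (P x) = Y.toPairedComplex.assocProj P x - x - P (Y.d x) := by
        simp [PairedComplex.assocProj]
        abel
      rw [key]
      have h1 : Y.toPairedComplex.assocProj P x ∈ Submodule.span ℝ {x : A | TreeGen Y P x} :=
        Submodule.subset_span
          (TreeGen.base i _ (assocProj_degree Y P hPdeg i x hi) ⟨x, rfl⟩)
      have h2 : (x : A) ∈ Submodule.span ℝ {x : A | TreeGen Y P x} := Submodule.subset_span hx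
      have h3 : P (Y.d x) ∈ Submodule.span ℝ {x : A | TreeGen Y P x} := treeGen_P_mem Y P _ ih
      exact Submodule.sub_mem _ (Submodule.sub_mem _ h1 h2) h3

lemma treeGen_range_le (hPdeg : Y.toPairedComplex.IsDegree P (-1)) :
    LinearMap.range (Y.toPairedComplex.assocProj P) ≤ Submodule.span ℝ {x : A | TreeGen Y P x} := by
  rintro _ ⟨a, rfl⟩
  have htop : a ∈ (⊤ : Submodule ℝ A) := Submodule.mem_top
  rw [← Y.internal.submodule_iSup_eq_top] at htop
  refine Submodule.iSup_induction _ (motive := fun z => Y.toPairedComplex.assocProj P z ∈ Submodule.span ℝ {x : A | TreeGen Y P x})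
    htop ?_ ?_ ?_
  · intro i z hz
    exact Submodule.subset_span
      (TreeGen.base i _ (assocProj_degree Y P hPdeg i z hz) ⟨z, rfl⟩)
  · simp
  · intro u v hu hv
    rw [map_add]
    exact Submodule.add_mem _ hu hv

lemma treeGen_graded (hPdeg : Y.toPairedComplex.IsDegree P (-1)) :
    Y.toPairedComplex.IsGradedSubspace (Submodule.span ℝ {x : A | TreeGen Y P x}) := by
  intro x hx
  have hle : Submodule.span ℝ {x : A | TreeGen Y P x} ≤ ⨆ i : ℤ, Submodule.span ℝ {x : A | TreeGen Y P x} ⊓ Y.grading i := by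
    apply Submodule.span_le.2
    intro z hz
    obtain ⟨i, hi⟩ := treeGen_homog Y P hPdeg z hz
    exact Submodule.mem_iSup_of_mem i ⟨Submodule.subset_span hz, hi⟩
  exact hle hx

end AuxStmt16

section Statements

variable {A B : Type*} [AddCommGroup A] [Module ℝ A] [AddCommGroup B] [Module ℝ B]
/-- the small subalgebra is the smallest graded subspace containing
`H_P` closed under the product and `P` (closure under `d` is automatic), and it is
spanned by the iterated tree evaluations. -/
theorem stmt16 (Y : PairedDGA A)
    (hHodge : Y.toPairedComplex.IsHodgeType)
    (P : A →ₗ[ℝ] A)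
    (hP : Y.toPairedComplex.IsPropagator P ∧ Y.toPairedComplex.IsSpecial P) :
    Y.smallSub P =
      sInf {S : Submodule ℝ A |
        LinearMap.range (Y.toPairedComplex.assocProj P) ≤ S ∧
        Y.toPairedComplex.IsGradedSubspace S ∧
        (∀ x ∈ S, ∀ y ∈ S, Y.mul x y ∈ S) ∧
        (∀ x ∈ S, P x ∈ S)} ∧
    Y.smallSub P = Submodule.span ℝ {x : A | TreeGen Y P x} := by
  have hPdeg : Y.toPairedComplex.IsDegree P (-1) := hP.1.1.1
  set T := Submodule.span ℝ {x : A | TreeGen Y P x} with hT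
  -- T belongs to the defining set of smallSub
  have hTmem : T ∈ {S : Submodule ℝ A |
      LinearMap.range (Y.toPairedComplex.assocProj P) ≤ S ∧
      Y.toPairedComplex.IsGradedSubspace S ∧
      (∀ x ∈ S, Y.d x ∈ S) ∧
      (∀ x ∈ S, ∀ y ∈ S, Y.mul x y ∈ S) ∧
      (∀ x ∈ S, P x ∈ S)} := by
    refine ⟨treeGen_range_le Y P hPdeg, treeGen_graded Y P hPdeg, ?_,
      treeGen_mul_mem Y P (fun z hz => Submodule.subset_span hz),
      treeGen_P_mem Y P⟩
    intro x hx
    refine Submodule.span_induction ?_ ?_ ?_ ?_ hx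
    · exact fun z hz => treeGen_d_mem Y P hPdeg z hz
    · simp
    · intro u v _ _ hu hv; rw [map_add]; exact Submodule.add_mem _ hu hv
    · intro c u _ hu; rw [map_smul]; exact Submodule.smul_mem _ _ hu
  have hle1 : Y.smallSub P ≤ T := sInf_le hTmem
  have hle2 : T ≤ sInf {S : Submodule ℝ A |
      LinearMap.range (Y.toPairedComplex.assocProj P) ≤ S ∧
      Y.toPairedComplex.IsGradedSubspace S ∧
      (∀ x ∈ S, ∀ y ∈ S, Y.mul x y ∈ S) ∧
      (∀ x ∈ S, P x ∈ S)} := by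
    apply le_sInf
    rintro S ⟨hr, _, hm, hp⟩
    apply Submodule.span_le.2
    intro z hz
    induction hz with
    | base i x hxi hxr => exact hr hxr
    | mul x y _ _ ihx ihy => exact hm x ihx y ihy
    | app x _ ih => exact hp x ih
  have hle3 : sInf {S : Submodule ℝ A |
      LinearMap.range (Y.toPairedComplex.assocProj P) ≤ S ∧
      Y.toPairedComplex.IsGradedSubspace S ∧
      (∀ x ∈ S, ∀ y ∈ S, Y.mul x y ∈ S) ∧
      (∀ x ∈ S, P x ∈ S)} ≤ Y.smallSub P := by
    apply sInf_le_sInf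
    rintro S ⟨h1, h2, _, h4, h5⟩
    exact ⟨h1, h2, h4, h5⟩
  constructor
  · exact le_antisymm (hle1.trans hle2) hle3
  · exact le_antisymm hle1 (hle2.trans hle3)

end Statements
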